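/- For the sinusoid activation σ(t) = sin(t), whose power series coefficients are a_{2j+1} = (−1)^j/(2j+1)! and a_{2j} = 0, the quantity C^γ_σ(λ) associated to the Gaussian RBF kernel with parameter γ > 0 satisfies, for every λ ≥ 0: C^γ_σ(λ) = √(e^{2γ} ∑_{j=0}^∞ (1/(2j+1)!) (λ²/(2γ))^{2j+1}) ≤ exp(λ²/(4γ) + γ). In particular the series converges for every λ ≥ 0. -/

import Mathlib

/-- Power series coefficients of `sin`: `a_{2j+1} = (-1)^j/(2j+1)!`, `a_{2j} = 0`. -/
noncomputable def sinCoeff (j : ℕ) : ℝ :=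
  if j % 2 = 1 then (-1 : ℝ) ^ (j / 2) / (Nat.factorial j : ℝ) else 0

lemma sinCoeff_odd (n : ℕ) :
    sinCoeff (2 * n + 1) = (-1 : ℝ) ^ n / (Nat.factorial (2 * n + 1) : ℝ) := by
  have h1 : (2 * n + 1) % 2 = 1 := by omega
  have h2 : (2 * n + 1) / 2 = n := by omega
  simp [sinCoeff, h1, h2]

lemma odd_injective : Function.Injective (fun n : ℕ => 2 * n + 1) := by
  intro a b h
  simp only at h
  omega

lemma sinCoeff_not_range {j : ℕ} (hj : j ∉ Set.range (fun n : ℕ => 2 * n + 1)) :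
    sinCoeff j = 0 := by
  have : j % 2 = 0 := by
    by_contra h
    refine hj ⟨j / 2, ?_⟩
    show 2 * (j / 2) + 1 = j
    omega
  simp [sinCoeff, this]

/-- for the sinusoid activation `σ = sin`, the quantity
`C^γ_σ(λ) = √(∑_j (j! e^{2γ}/(2γ)^j) a_j² λ^{2j})` associated to the Gaussian RBF
kernel with parameter `γ > 0` satisfies, for every `λ ≥ 0`,
`C^γ_σ(λ) = √(e^{2γ} ∑_j (1/(2j+1)!) (λ²/(2γ))^{2j+1}) ≤ exp(λ²/(4γ) + γ)`;
in particular the series converges. -/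
theorem Csigma_sin_gaussian_kernel (γ : ℝ) (hγ : 0 < γ) (lam : ℝ) (hlam : 0 ≤ lam) :
    (∀ t : ℝ, HasSum (fun j : ℕ => sinCoeff j * t ^ j) (Real.sin t)) ∧
    (Summable fun j : ℕ =>
      ((Nat.factorial j : ℝ) * Real.exp (2 * γ) / (2 * γ) ^ j)
        * (sinCoeff j) ^ 2 * lam ^ (2 * j)) ∧
    (Summable fun j : ℕ =>
      (1 / (Nat.factorial (2 * j + 1) : ℝ)) * (lam ^ 2 / (2 * γ)) ^ (2 * j + 1)) ∧
    Real.sqrt (∑' j : ℕ,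
        ((Nat.factorial j : ℝ) * Real.exp (2 * γ) / (2 * γ) ^ j)
          * (sinCoeff j) ^ 2 * lam ^ (2 * j))
      = Real.sqrt (Real.exp (2 * γ) * ∑' j : ℕ,
          (1 / (Nat.factorial (2 * j + 1) : ℝ)) * (lam ^ 2 / (2 * γ)) ^ (2 * j + 1)) ∧
    Real.sqrt (Real.exp (2 * γ) * ∑' j : ℕ,
        (1 / (Nat.factorial (2 * j + 1) : ℝ)) * (lam ^ 2 / (2 * γ)) ^ (2 * j + 1))
      ≤ Real.exp (lam ^ 2 / (4 * γ) + γ) := by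
  have h2γ : (0 : ℝ) < 2 * γ := by linarith
  set x : ℝ := lam ^ 2 / (2 * γ) with hx
  have hx0 : 0 ≤ x := div_nonneg (sq_nonneg _) h2γ.le
  -- the general term of the big series, and its value on odds
  set f : ℕ → ℝ := fun j =>
    ((Nat.factorial j : ℝ) * Real.exp (2 * γ) / (2 * γ) ^ j)
      * (sinCoeff j) ^ 2 * lam ^ (2 * j) with hf
  set g : ℕ → ℝ := fun n => (1 / (Nat.factorial (2 * n + 1) : ℝ)) * x ^ (2 * n + 1) with hg
  have hfzero : ∀ j ∉ Set.range (fun n : ℕ => 2 * n + 1), f j = 0 := by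
    intro j hj
    simp [hf, sinCoeff_not_range hj]
  have hfodd : ∀ n : ℕ, f (2 * n + 1) = Real.exp (2 * γ) * g n := by
    intro n
    have hfac : (Nat.factorial (2 * n + 1) : ℝ) ≠ 0 := by
      exact_mod_cast (Nat.factorial_pos _).ne'
    have hpow : ((2 : ℝ) * γ) ^ (2 * n + 1) ≠ 0 := pow_ne_zero _ h2γ.ne'
    have hlampow : lam ^ (2 * (2 * n + 1)) = (lam ^ 2) ^ (2 * n + 1) := by
      rw [pow_mul]
    simp only [hf, hg, sinCoeff_odd, hx]
    simp only [div_pow, hlampow]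
    have h1 : ((-1 : ℝ) ^ n) ^ 2 = 1 := by
      rw [← pow_mul, mul_comm n 2, pow_mul]; norm_num
    rw [h1]
    field_simp
  -- summability of g by comparison with exp series
  have hexp : HasSum (fun n : ℕ => x ^ n / (Nat.factorial n : ℝ)) (Real.exp x) := by
    rw [Real.exp_eq_exp_ℝ]
    exact NormedSpace.expSeries_div_hasSum_exp x
  have hg_eq : ∀ n : ℕ, g n = x ^ (2 * n + 1) / (Nat.factorial (2 * n + 1) : ℝ) := by
    intro n; simp [hg, div_eq_mul_inv, mul_comm]
  have hgsum : Summable g := by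
    have := (hexp.summable.comp_injective odd_injective)
    exact this.congr (fun n => (hg_eq n).symm)
  have hfsum : Summable f := by
    rw [← odd_injective.summable_iff hfzero]
    apply Summable.congr (hgsum.mul_left (Real.exp (2 * γ)))
    intro n
    exact (hfodd n).symm
  -- tsum equality
  have htsum : (∑' j, f j) = Real.exp (2 * γ) * ∑' n, g n := by
    have hsupp : Function.support f ⊆ Set.range (fun n : ℕ => 2 * n + 1) := by
      intro j hj
      by_contra hc
      exact hj (hfzero j hc)
    rw [← odd_injective.tsum_eq hsupp, ← tsum_mul_left]
    exact tsum_congr hfodd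
  refine ⟨?_, hfsum, hgsum, by rw [htsum], ?_⟩
  · -- power series of sin
    intro t
    rw [← odd_injective.hasSum_iff (by
      intro j hj; simp [sinCoeff_not_range hj])]
    have heq : ((fun j : ℕ => sinCoeff j * t ^ j) ∘ fun n : ℕ => 2 * n + 1)
        = fun n : ℕ => (-1 : ℝ) ^ n * t ^ (2 * n + 1) / (Nat.factorial (2 * n + 1) : ℝ) := by
      funext n
      simp only [Function.comp, sinCoeff_odd]
      ring
    rw [heq]
    exact Real.hasSum_sin t
  · -- the bound
    have hsum_le : (∑' n, g n) ≤ Real.exp x := by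
      rw [← hexp.tsum_eq]
      refine Summable.tsum_le_tsum_of_inj (fun n : ℕ => 2 * n + 1) odd_injective
        (fun c _ => by positivity) (fun n => ?_) hgsum hexp.summable
      rw [hg_eq n]
    calc Real.sqrt (Real.exp (2 * γ) * ∑' n, g n)
        ≤ Real.sqrt (Real.exp (2 * γ) * Real.exp x) := by
          apply Real.sqrt_le_sqrt
          exact mul_le_mul_of_nonneg_left hsum_le (Real.exp_nonneg _)
      _ = Real.exp (lam ^ 2 / (4 * γ) + γ) := by
          rw [← Real.exp_add, ← Real.exp_half]
          congr 1
          rw [hx]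
          field_simp
          ring
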